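/- Let Λ be a free abelian group of finite rank equipped with a ℤ-valued symmetric bilinear form ⟨·,·⟩. Then there exists a function ε : Λ × Λ → {±1} such that: (i) ε(α, 0) = ε(0, α) = 1 for all α; (ii) ε is a 2-cocycle: ε(α, β)·ε(α + β, γ) = ε(α, β + γ)·ε(β, γ) for all α, β, γ ∈ Λ; and (iii) its commutator satisfies ε(α, β)·ε(β, α)⁻¹ = (−1)^{⟨α,β⟩ + ⟨α,α⟩·⟨β,β⟩} for all α, β ∈ Λ. (This is the Frenkel–Kac cocycle defining the lattice vertex superalgebra structure on V_Λ, with parity p(α) = ⟨α,α⟩ mod 2.) -/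

import Mathlib

private lemma neg_one_zpow_congr (m n : ℤ) (h : m ≡ n [ZMOD 2]) :
    (-1 : ℤˣ) ^ m = (-1 : ℤˣ) ^ n := by
  obtain ⟨t, ht⟩ : (2 : ℤ) ∣ n - m := h.dvd
  have hn : n = m + 2 * t := by linarith
  rw [hn, zpow_add, mul_comm (2 : ℤ) t, zpow_mul]
  have h2 : ((-1 : ℤˣ) ^ t) ^ (2 : ℤ) = 1 := by
    rw [show (2 : ℤ) = ((2 : ℕ) : ℤ) from rfl, zpow_natCast, Int.units_sq]
  rw [h2, mul_one]

/-- **Existence of the Frenkel–Kac 2-cocycle.** Let `Λ` be a free abelian group of finite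
rank with a `ℤ`-valued symmetric bilinear form `⟨·,·⟩`.  Then there is a map
`ε : Λ × Λ → {±1}` with `ε(α, 0) = ε(0, α) = 1`, satisfying the 2-cocycle identity
`ε(α, β)·ε(α + β, γ) = ε(α, β + γ)·ε(β, γ)`, and whose commutator is
`ε(α, β)·ε(β, α)⁻¹ = (−1)^{⟨α,β⟩ + ⟨α,α⟩·⟨β,β⟩}`.  This cocycle defines the lattice
vertex superalgebra structure on `V_Λ` with parity `p(α) = ⟨α,α⟩ mod 2`. -/
theorem exists_frenkel_kac_cocycle
    (Λ : Type*) [AddCommGroup Λ] [Module.Free ℤ Λ] [Module.Finite ℤ Λ]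
    (B : LinearMap.BilinForm ℤ Λ) (hB : B.IsSymm) :
    ∃ ε : Λ → Λ → ℤˣ,
      (∀ α : Λ, ε α 0 = 1 ∧ ε 0 α = 1) ∧
      (∀ α β γ : Λ, ε α β * ε (α + β) γ = ε α (β + γ) * ε β γ) ∧
      (∀ α β : Λ, ε α β * (ε β α)⁻¹ = (-1 : ℤˣ) ^ (B α β + B α α * B β β)) := by
  classical
  set ι := Module.Free.ChooseBasisIndex ℤ Λ
  set b : Module.Basis ι ℤ Λ := Module.Free.chooseBasis ℤ Λ
  set e : ι ≃ Fin (Fintype.card ι) := Fintype.equivFin ι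
  -- the matrix of the "upper triangular" bilinear form
  set m : ι → ι → ℤ := fun i j =>
    if e i < e j then B (b i) (b j) + B (b i) (b i) * B (b j) (b j) else 0 with hm
  set C : Λ →ₗ[ℤ] Λ →ₗ[ℤ] ℤ := b.constr ℤ (fun i => b.constr ℤ (m i)) with hC
  have hCb : ∀ i j, C (b i) (b j) = m i j := by
    intro i j
    simp [hC, Module.Basis.constr_basis]
  -- the cast to ZMod 2
  set f : ℤ →ₗ[ℤ] ZMod 2 := (Int.castRingHom (ZMod 2)).toAddMonoidHom.toIntLinearMap with hf
  have hfapp : ∀ n : ℤ, f n = (n : ZMod 2) := fun n => rfl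
  -- the "diagonal" map is additive mod 2
  have gadd : ∀ α β : Λ, ((B (α + β) (α + β) : ℤ) : ZMod 2)
      = ((B α α : ℤ) : ZMod 2) + ((B β β : ℤ) : ZMod 2) := by
    intro α β
    have h1 : B (α + β) (α + β) = B α α + B β β + (B α β + B β α) := by
      simp [map_add, LinearMap.add_apply]; ring
    have h2 : B α β = B β α := by
      have := hB.eq β α; simpa using this.symm
    have : B (α + β) (α + β) = B α α + B β β + 2 * B β α := by rw [h1, h2]; ring
    rw [this]
    push_cast
    have h20 : (2 : ZMod 2) = 0 := rfl
    rw [h20]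
    ring
  set g : Λ →ₗ[ℤ] ZMod 2 :=
    AddMonoidHom.toIntLinearMap
      { toFun := fun α => ((B α α : ℤ) : ZMod 2)
        map_zero' := by simp
        map_add' := gadd } with hg
  have hgapp : ∀ α : Λ, g α = ((B α α : ℤ) : ZMod 2) := fun α => rfl
  -- bundled bilinear maps into ZMod 2
  set F : Λ →ₗ[ℤ] Λ →ₗ[ℤ] ZMod 2 := C.compr₂ f - (C.flip).compr₂ f with hF
  set D : Λ →ₗ[ℤ] Λ →ₗ[ℤ] ZMod 2 :=
    B.compr₂ f + (LinearMap.mul ℤ (ZMod 2)).compl₁₂ g g with hD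
  have key : F = D := by
    apply b.ext; intro i
    apply b.ext; intro j
    have hFij : F (b i) (b j)
        = ((m i j : ℤ) : ZMod 2) - ((m j i : ℤ) : ZMod 2) := by
      simp [hF, LinearMap.sub_apply, LinearMap.compr₂_apply, LinearMap.flip_apply,
        hCb, hfapp]
    have hDij : D (b i) (b j)
        = ((B (b i) (b j) : ℤ) : ZMod 2)
          + ((B (b i) (b i) : ℤ) : ZMod 2) * ((B (b j) (b j) : ℤ) : ZMod 2) := by
      simp [hD, LinearMap.add_apply, LinearMap.compr₂_apply, LinearMap.compl₁₂_apply,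
        LinearMap.mul_apply', hfapp, hgapp]
    rw [hFij, hDij]
    have hmul : ∀ x : ZMod 2, x * x = x := by decide
    have hneg : ∀ x : ZMod 2, -x = x := by decide
    have hadd : ∀ x : ZMod 2, x + x = 0 := by decide
    rcases lt_trichotomy (e i) (e j) with h | h | h
    · have h' : ¬ e j < e i := asymm h
      simp only [hm, h, h', if_true, if_false]
      push_cast
      ring
    · have hij : i = j := e.injective h
      subst hij
      have h' : ¬ e i < e i := lt_irrefl _
      simp only [hm, h', if_false]
      push_cast
      rw [hmul, sub_self]
      exact (hadd _).symm
    · have h' : ¬ e i < e j := asymm h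
      have hsym : B (b j) (b i) = B (b i) (b j) := by
        have := hB.eq (b j) (b i); simpa using this
      simp only [hm, h, h', if_true, if_false, hsym]
      push_cast
      rw [zero_sub, hneg]
      ring
  -- the congruence for all α β
  have hcong : ∀ α β : Λ,
      (C α β - C β α) ≡ (B α β + B α α * B β β) [ZMOD 2] := by
    intro α β
    have hFD : F α β = D α β := by rw [key]
    have hFapp : F α β = ((C α β : ℤ) : ZMod 2) - ((C β α : ℤ) : ZMod 2) := by
      simp [hF, LinearMap.sub_apply, LinearMap.compr₂_apply, LinearMap.flip_apply, hfapp]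
    have hDapp : D α β = ((B α β : ℤ) : ZMod 2)
        + ((B α α : ℤ) : ZMod 2) * ((B β β : ℤ) : ZMod 2) := by
      simp [hD, LinearMap.add_apply, LinearMap.compr₂_apply, LinearMap.compl₁₂_apply,
        LinearMap.mul_apply', hfapp, hgapp]
    have : ((C α β - C β α : ℤ) : ZMod 2)
        = ((B α β + B α α * B β β : ℤ) : ZMod 2) := by
      push_cast
      rw [← hFapp, hFD, hDapp]
    exact (ZMod.intCast_eq_intCast_iff _ _ 2).mp this
  -- define the cocycle
  refine ⟨fun α β => (-1 : ℤˣ) ^ (C α β), ?_, ?_, ?_⟩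
  · intro α
    constructor <;> simp
  · intro α β γ
    show (-1 : ℤˣ) ^ (C α β) * (-1 : ℤˣ) ^ (C (α + β) γ)
        = (-1 : ℤˣ) ^ (C α (β + γ)) * (-1 : ℤˣ) ^ (C β γ)
    have h1 : C (α + β) γ = C α γ + C β γ := by simp [map_add, LinearMap.add_apply]
    have h2 : C α (β + γ) = C α β + C α γ := by simp [map_add]
    rw [h1, h2, zpow_add, zpow_add]
    exact (mul_assoc _ _ _).symm
  · intro α β
    show (-1 : ℤˣ) ^ (C α β) * ((-1 : ℤˣ) ^ (C β α))⁻¹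
        = (-1 : ℤˣ) ^ (B α β + B α α * B β β)
    have : (-1 : ℤˣ) ^ (C α β) * ((-1 : ℤˣ) ^ (C β α))⁻¹
        = (-1 : ℤˣ) ^ (C α β - C β α) := by
      rw [zpow_sub]
    rw [this]
    exact neg_one_zpow_congr _ _ (hcong α β)
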